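/- Let d̃, k̃ : ℕ → ℕ with d̃(n) ≥ 1 for all n, and set l̃(n) = d̃(n) + k̃(n). Let ν : ℕ → ℕ be strictly increasing with ν(1) = 1. For m ≥ 2, set D(m) = ∏_{j=ν(m−1)+1}^{ν(m)} d̃(j) and L(m) = ∏_{j=ν(m−1)+1}^{ν(m)} l̃(j). Assume the series ∑_{n=2}^∞ k̃(n)/l̃(n) converges. Then the series ∑_{m=2}^∞ (L(m) − D(m))/L(m) converges and ∑_{m=2}^∞ (L(m) − D(m))/L(m) ≤ ∑_{n=2}^∞ k̃(n)/l̃(n). -/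

import Mathlib

lemma one_sub_prod_le_sum_aux (s : Finset ℕ) (x : ℕ → ℝ)
    (h0 : ∀ j ∈ s, 0 ≤ x j) (h1 : ∀ j ∈ s, x j ≤ 1) :
    1 - ∏ j ∈ s, (1 - x j) ≤ ∑ j ∈ s, x j := by
  induction s using Finset.induction_on with
  | empty => simp
  | @insert a s hnot ih =>
    rw [Finset.prod_insert hnot, Finset.sum_insert hnot]
    have h0' : ∀ j ∈ s, 0 ≤ x j := fun j hj => h0 j (Finset.mem_insert_of_mem hj)
    have h1' : ∀ j ∈ s, x j ≤ 1 := fun j hj => h1 j (Finset.mem_insert_of_mem hj)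
    have ha0 := h0 a (Finset.mem_insert_self a s)
    have ha1 := h1 a (Finset.mem_insert_self a s)
    have hp0 : 0 ≤ ∏ j ∈ s, (1 - x j) :=
      Finset.prod_nonneg fun j hj => by linarith [h1' j hj]
    have hp1 : ∏ j ∈ s, (1 - x j) ≤ 1 :=
      Finset.prod_le_one (fun j hj => by linarith [h1' j hj])
        (fun j hj => by linarith [h0' j hj])
    have := ih h0' h1'
    nlinarith


/-- with l̃ = d̃ + k̃, ν strictly increasing with ν(1) = 1,
D(m) = ∏_{ν(m−1)<j≤ν(m)} d̃(j), L(m) = ∏_{ν(m−1)<j≤ν(m)} l̃(j), and assuming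
∑_{n≥2} k̃(n)/l̃(n) converges, the series ∑_{m≥2} (L(m)−D(m))/L(m) converges and
is bounded by ∑_{n≥2} k̃(n)/l̃(n). -/
theorem stmt_8 (dt kt : ℕ → ℕ) (hdt : ∀ n, 1 ≤ dt n)
    (lt : ℕ → ℕ) (hlt : ∀ n, lt n = dt n + kt n)
    (ν : ℕ → ℕ) (hν : StrictMono ν) (hν1 : ν 1 = 1)
    (D L : ℕ → ℕ)
    (hD : ∀ m, 2 ≤ m → D m = ∏ j ∈ Finset.Icc (ν (m - 1) + 1) (ν m), dt j)
    (hL : ∀ m, 2 ≤ m → L m = ∏ j ∈ Finset.Icc (ν (m - 1) + 1) (ν m), lt j)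
    (hsum : Summable (fun n : ℕ => (kt (n + 2) : ℝ) / (lt (n + 2) : ℝ))) :
    Summable (fun m : ℕ => ((L (m + 2) : ℝ) - (D (m + 2) : ℝ)) / (L (m + 2) : ℝ)) ∧
    ∑' m : ℕ, ((L (m + 2) : ℝ) - (D (m + 2) : ℝ)) / (L (m + 2) : ℝ)
      ≤ ∑' n : ℕ, (kt (n + 2) : ℝ) / (lt (n + 2) : ℝ) := by
  set h : ℕ → ℝ := fun n => (kt (n + 2) : ℝ) / (lt (n + 2) : ℝ) with hh
  have hlt1 : ∀ n, 1 ≤ lt n := fun n => by rw [hlt]; exact le_add_right (hdt n)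
  have hltpos : ∀ n, (0:ℝ) < (lt n : ℝ) := fun n => by
    exact_mod_cast Nat.lt_of_lt_of_le Nat.zero_lt_one (hlt1 n)
  set g : ℕ → ℝ := fun m => ∑ j ∈ Finset.Ioc (ν (m + 1)) (ν (m + 2)), (kt j : ℝ) / (lt j : ℝ)
    with hg
  set f : ℕ → ℝ := fun m => ((L (m + 2) : ℝ) - (D (m + 2) : ℝ)) / (L (m + 2) : ℝ) with hf
  -- pointwise facts
  have hDL : ∀ m : ℕ, (0:ℝ) < (L (m+2) : ℝ) ∧ (D (m+2) : ℝ) ≤ (L (m+2) : ℝ) ∧ f m ≤ g m := by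
    intro m
    have h2 : 2 ≤ m + 2 := by omega
    have hDm := hD (m+2) h2
    have hLm := hL (m+2) h2
    have hmm : m + 2 - 1 = m + 1 := by omega
    rw [hmm] at hDm hLm
    set s := Finset.Icc (ν (m + 1) + 1) (ν (m + 2)) with hs
    have hseq : s = Finset.Ioc (ν (m + 1)) (ν (m + 2)) := by
      rw [hs, Finset.Icc_add_one_left_eq_Ioc]
    have hLpos : (0:ℝ) < (L (m+2) : ℝ) := by
      have : 1 ≤ L (m+2) := by
        rw [hLm]; exact Finset.one_le_prod' fun j _ => hlt1 j
      exact_mod_cast Nat.lt_of_lt_of_le Nat.zero_lt_one this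
    have hDleL : (D (m+2) : ℝ) ≤ (L (m+2) : ℝ) := by
      have : D (m+2) ≤ L (m+2) := by
        rw [hDm, hLm]
        exact Finset.prod_le_prod' fun j _ => by rw [hlt]; exact Nat.le_add_right _ _
      exact_mod_cast this
    refine ⟨hLpos, hDleL, ?_⟩
    have hratio : (D (m+2) : ℝ) / (L (m+2) : ℝ) = ∏ j ∈ s, (1 - (kt j : ℝ) / (lt j : ℝ)) := by
      rw [hDm, hLm]
      push_cast
      rw [← Finset.prod_div_distrib]
      refine Finset.prod_congr rfl fun j _ => ?_
      have hne : (lt j : ℝ) ≠ 0 := (hltpos j).ne'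
      field_simp
      rw [hlt]; push_cast; ring
    have key := one_sub_prod_le_sum_aux s (fun j => (kt j : ℝ) / (lt j : ℝ))
      (fun j _ => div_nonneg (Nat.cast_nonneg _) (Nat.cast_nonneg _))
      (fun j _ => by
        rw [div_le_one (hltpos j)]
        exact_mod_cast by rw [hlt]; exact Nat.le_add_left _ _)
    rw [hf, hg]
    simp only [← hseq]
    calc ((L (m+2) : ℝ) - (D (m+2) : ℝ)) / (L (m+2) : ℝ)
        = 1 - (D (m+2) : ℝ) / (L (m+2) : ℝ) := by field_simp
      _ = 1 - ∏ j ∈ s, (1 - (kt j : ℝ) / (lt j : ℝ)) := by rw [hratio]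
      _ ≤ ∑ j ∈ s, (kt j : ℝ) / (lt j : ℝ) := key
  have hf0 : ∀ m, 0 ≤ f m := fun m =>
    div_nonneg (by linarith [(hDL m).2.1]) (hDL m).1.le
  have hfg : ∀ m, f m ≤ g m := fun m => (hDL m).2.2
  have hg0 : ∀ m, 0 ≤ g m := fun m =>
    Finset.sum_nonneg fun j _ => div_nonneg (Nat.cast_nonneg _) (Nat.cast_nonneg _)
  have hh0 : ∀ n, 0 ≤ h n := fun n => div_nonneg (Nat.cast_nonneg _) (Nat.cast_nonneg _)
  -- partial sums of g
  have hpart : ∀ M : ℕ, ∑ m ∈ Finset.range M, g m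
      = ∑ j ∈ Finset.Ioc (ν 1) (ν (M + 1)), (kt j : ℝ) / (lt j : ℝ) := by
    intro M
    induction M with
    | zero => simp
    | succ M ih =>
      rw [Finset.sum_range_succ, ih, hg]
      exact Finset.sum_Ioc_consecutive _ (hν.monotone (by omega)) (hν.monotone (by omega))
  have hbound : ∀ M : ℕ, ∑ m ∈ Finset.range M, g m ≤ ∑' n, h n := by
    intro M
    rw [hpart M, hν1]
    have h1 : Finset.Ioc 1 (ν (M+1)) = Finset.Icc 2 (ν (M+1)) := (Finset.Icc_add_one_left_eq_Ioc ..).symm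
    rw [h1, ← Finset.Ico_add_one_right_eq_Icc, Finset.sum_Ico_eq_sum_range]
    calc ∑ i ∈ Finset.range (ν (M+1) + 1 - 2), (kt (2 + i) : ℝ) / (lt (2 + i) : ℝ)
        = ∑ i ∈ Finset.range (ν (M+1) + 1 - 2), h i := by
          refine Finset.sum_congr rfl fun i _ => ?_
          rw [hh]; norm_num [Nat.add_comm]
      _ ≤ ∑' n, h n := Summable.sum_le_tsum _ (fun i _ => hh0 i) hsum
  have hgsum : Summable g := summable_of_sum_range_le hg0 hbound
  have hgle : ∑' m, g m ≤ ∑' n, h n := Summable.tsum_le_of_sum_range_le hgsum hbound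
  have hfsum : Summable f := Summable.of_nonneg_of_le hf0 hfg hgsum
  exact ⟨hfsum, le_trans (Summable.tsum_le_tsum hfg hfsum hgsum) hgle⟩
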